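/- (Gate-set orthogonality.) Let μ be a probability measure on the unitary group U(4) = Matrix.unitaryGroup (Fin 4) ℂ that is invariant under right multiplication by a uniformly random 2-qubit Pauli, i.e., μ equals the average over the 16 2-qubit Pauli strings V of the pushforward of μ under the map U ↦ U·V. Then for any 2-qubit Pauli strings P ≠ Q, the (entrywise) integral ∫ (U·P·U†) ⊗ (U·Q·U†) dμ(U) equals the zero 16×16 matrix. -/

import Mathlib

open Matrix MeasureTheory

/-- Labels for the four single-qubit Pauli matrices. -/
inductive PauliLabel : Type
  | I | X | Y | Z
  deriving DecidableEq

instance : Fintype PauliLabel :=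
  ⟨{PauliLabel.I, PauliLabel.X, PauliLabel.Y, PauliLabel.Z}, fun x => by cases x <;> simp⟩

/-- The single-qubit Pauli matrices over `ℂ`. -/
noncomputable def pauliMat : PauliLabel → Matrix (Fin 2) (Fin 2) ℂ
  | PauliLabel.I => !![1, 0; 0, 1]
  | PauliLabel.X => !![0, 1; 1, 0]
  | PauliLabel.Y => !![0, -Complex.I; Complex.I, 0]
  | PauliLabel.Z => !![1, 0; 0, -1]

/-- The Kronecker product of two `2×2` complex matrices, written out as a `4×4` matrix
(rows/columns ordered as `00, 01, 10, 11`). -/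
noncomputable def kron2 (A B : Matrix (Fin 2) (Fin 2) ℂ) : Matrix (Fin 4) (Fin 4) ℂ :=
  !![A 0 0 * B 0 0, A 0 0 * B 0 1, A 0 1 * B 0 0, A 0 1 * B 0 1;
     A 0 0 * B 1 0, A 0 0 * B 1 1, A 0 1 * B 1 0, A 0 1 * B 1 1;
     A 1 0 * B 0 0, A 1 0 * B 0 1, A 1 1 * B 0 0, A 1 1 * B 0 1;
     A 1 0 * B 1 0, A 1 0 * B 1 1, A 1 1 * B 1 0, A 1 1 * B 1 1]

/-- The 2-qubit Pauli string `σ_a ⊗ σ_b`, as a `4×4` complex matrix. -/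
noncomputable def pauli2 (a b : PauliLabel) : Matrix (Fin 4) (Fin 4) ℂ :=
  kron2 (pauliMat a) (pauliMat b)

lemma kron2_mul (A B C D : Matrix (Fin 2) (Fin 2) ℂ) :
    kron2 A B * kron2 C D = kron2 (A * C) (B * D) := by
  ext i j
  fin_cases i <;> fin_cases j <;>
    simp [kron2, Matrix.mul_apply, Fin.sum_univ_four, Fin.sum_univ_two] <;> ring

lemma kron2_star (A B : Matrix (Fin 2) (Fin 2) ℂ) :
    star (kron2 A B) = kron2 (star A) (star B) := by
  ext i j
  fin_cases i <;> fin_cases j <;>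
    simp [kron2, Matrix.star_eq_conjTranspose, Matrix.conjTranspose_apply]

lemma kron2_one : kron2 1 1 = 1 := by
  ext i j
  fin_cases i <;> fin_cases j <;>
    simp [kron2, Matrix.one_apply, Matrix.vecHead, Matrix.vecTail]

lemma pauliMat_mul_star (a : PauliLabel) : pauliMat a * star (pauliMat a) = 1 := by
  cases a <;>
    · ext i j
      fin_cases i <;> fin_cases j <;>
        simp [pauliMat, Matrix.mul_apply, Fin.sum_univ_two, Matrix.one_apply,
          Matrix.star_eq_conjTranspose, Matrix.conjTranspose_apply]

/-- Every 2-qubit Pauli string is a unitary `4×4` matrix. -/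
lemma pauli2_mem_unitaryGroup (a b : PauliLabel) :
    pauli2 a b ∈ Matrix.unitaryGroup (Fin 4) ℂ := by
  rw [Matrix.mem_unitaryGroup_iff, pauli2, kron2_star, kron2_mul,
    pauliMat_mul_star, pauliMat_mul_star, kron2_one]

/-- The 2-qubit Pauli string `σ_a ⊗ σ_b` as an element of the unitary group `U(4)`. -/
noncomputable def pauli2U (a b : PauliLabel) : Matrix.unitaryGroup (Fin 4) ℂ :=
  ⟨pauli2 a b, pauli2_mem_unitaryGroup a b⟩


noncomputable def sgn1 : PauliLabel → PauliLabel → ℂ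
  | .I, _ => 1
  | _, .I => 1
  | .X, .X => 1
  | .Y, .Y => 1
  | .Z, .Z => 1
  | _, _ => -1

lemma conj1 (a b : PauliLabel) :
    pauliMat a * pauliMat b * star (pauliMat a) = sgn1 a b • pauliMat b := by
  cases a <;> cases b <;>
    · ext i j
      fin_cases i <;> fin_cases j <;>
        simp [pauliMat, sgn1, Matrix.mul_apply, Fin.sum_univ_two,
          Matrix.star_eq_conjTranspose, Matrix.conjTranspose_apply, Complex.ext_iff]

lemma sum_pauli (f : PauliLabel → ℂ) :
    ∑ a : PauliLabel, f a = f .I + f .X + f .Y + f .Z := by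
  rw [show (Finset.univ : Finset PauliLabel) =
    {PauliLabel.I, PauliLabel.X, PauliLabel.Y, PauliLabel.Z} by decide]
  simp [Finset.sum_insert, Finset.mem_insert]
  ring

lemma sgn_orth {a b : PauliLabel} (h : a ≠ b) :
    ∑ v : PauliLabel, sgn1 v a * sgn1 v b = 0 := by
  cases a <;> cases b <;> first
    | exact absurd rfl h
    | (rw [sum_pauli]; norm_num [sgn1])

lemma sgn_sum_zero {P Q : PauliLabel × PauliLabel} (h : P ≠ Q) :
    ∑ v : PauliLabel × PauliLabel,
      (sgn1 v.1 P.1 * sgn1 v.2 P.2) * (sgn1 v.1 Q.1 * sgn1 v.2 Q.2) = 0 := by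
  have key : (∑ a : PauliLabel, sgn1 a P.1 * sgn1 a Q.1)
      * (∑ b : PauliLabel, sgn1 b P.2 * sgn1 b Q.2) = 0 := by
    rcases (not_and_or.1 fun hh => h (Prod.ext hh.1 hh.2)) with h1 | h2
    · rw [sgn_orth h1, zero_mul]
    · rw [sgn_orth h2, mul_zero]
  rw [Fintype.sum_prod_type, ← key, Finset.sum_mul_sum]
  exact Finset.sum_congr rfl fun a _ => Finset.sum_congr rfl fun b _ => by ring

lemma kron2_smul (c d : ℂ) (A B : Matrix (Fin 2) (Fin 2) ℂ) :
    kron2 (c • A) (d • B) = (c * d) • kron2 A B := by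
  ext i j
  fin_cases i <;> fin_cases j <;> simp [kron2] <;> ring

lemma conj2 (a b c d : PauliLabel) :
    pauli2 a b * pauli2 c d * (pauli2 a b)ᴴ = (sgn1 a c * sgn1 b d) • pauli2 c d := by
  simp only [pauli2, ← Matrix.star_eq_conjTranspose]
  rw [kron2_star, kron2_mul, kron2_mul, conj1, conj1, kron2_smul]

open Kronecker in
lemma pointwise_key (P Q : PauliLabel × PauliLabel) (v : PauliLabel × PauliLabel)
    (U : Matrix.unitaryGroup (Fin 4) ℂ) (ij kl : Fin 4 × Fin 4) :
    ((((U * pauli2U v.1 v.2 : Matrix.unitaryGroup (Fin 4) ℂ) : Matrix (Fin 4) (Fin 4) ℂ)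
        * pauli2 P.1 P.2
        * ((U * pauli2U v.1 v.2 : Matrix.unitaryGroup (Fin 4) ℂ) : Matrix (Fin 4) (Fin 4) ℂ)ᴴ) ⊗ₖ
      (((U * pauli2U v.1 v.2 : Matrix.unitaryGroup (Fin 4) ℂ) : Matrix (Fin 4) (Fin 4) ℂ)
        * pauli2 Q.1 Q.2
        * ((U * pauli2U v.1 v.2 : Matrix.unitaryGroup (Fin 4) ℂ) : Matrix (Fin 4) (Fin 4) ℂ)ᴴ))
        ij kl
    = ((sgn1 v.1 P.1 * sgn1 v.2 P.2) * (sgn1 v.1 Q.1 * sgn1 v.2 Q.2)) •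
      ((((U : Matrix (Fin 4) (Fin 4) ℂ) * pauli2 P.1 P.2 * (U : Matrix (Fin 4) (Fin 4) ℂ)ᴴ) ⊗ₖ
        ((U : Matrix (Fin 4) (Fin 4) ℂ) * pauli2 Q.1 Q.2 * (U : Matrix (Fin 4) (Fin 4) ℂ)ᴴ))
        ij kl) := by
  have hc : ((U * pauli2U v.1 v.2 : Matrix.unitaryGroup (Fin 4) ℂ)
      : Matrix (Fin 4) (Fin 4) ℂ) = (U : Matrix (Fin 4) (Fin 4) ℂ) * pauli2 v.1 v.2 := rfl
  have hP : ∀ R : PauliLabel × PauliLabel,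
      (U : Matrix (Fin 4) (Fin 4) ℂ) * pauli2 v.1 v.2 * pauli2 R.1 R.2 *
        ((U : Matrix (Fin 4) (Fin 4) ℂ) * pauli2 v.1 v.2)ᴴ
      = (sgn1 v.1 R.1 * sgn1 v.2 R.2) •
        ((U : Matrix (Fin 4) (Fin 4) ℂ) * pauli2 R.1 R.2 * (U : Matrix (Fin 4) (Fin 4) ℂ)ᴴ) := by
    intro R
    rw [Matrix.conjTranspose_mul]
    calc (U : Matrix (Fin 4) (Fin 4) ℂ) * pauli2 v.1 v.2 * pauli2 R.1 R.2 *
          ((pauli2 v.1 v.2)ᴴ * (U : Matrix (Fin 4) (Fin 4) ℂ)ᴴ)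
        = (U : Matrix (Fin 4) (Fin 4) ℂ) *
            (pauli2 v.1 v.2 * pauli2 R.1 R.2 * (pauli2 v.1 v.2)ᴴ) *
            (U : Matrix (Fin 4) (Fin 4) ℂ)ᴴ := by
          simp only [Matrix.mul_assoc]
      _ = _ := by
          rw [conj2]
          simp only [Matrix.mul_smul, Matrix.smul_mul]
  rw [hc, hP P, hP Q]
  simp only [Matrix.kroneckerMap_apply, Matrix.smul_apply, smul_eq_mul]
  ring

set_option maxHeartbeats 2000000 in
open Kronecker in
/-- Gate-set orthogonality: if a probability measure `μ` on `U(4)` is invariant under right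
multiplication by a uniformly random 2-qubit Pauli, then for any 2-qubit Pauli strings
`P ≠ Q`, the entrywise integral `∫ (U·P·U†) ⊗ (U·Q·U†) dμ(U)` is the zero `16×16` matrix. -/
theorem gateset_orthogonality
    [MeasurableSpace (Matrix.unitaryGroup (Fin 4) ℂ)]
    [BorelSpace (Matrix.unitaryGroup (Fin 4) ℂ)]
    (μ : Measure (Matrix.unitaryGroup (Fin 4) ℂ)) [IsProbabilityMeasure μ]
    (hinv : μ = (16 : ENNReal)⁻¹ •
      ∑ v : PauliLabel × PauliLabel,
        Measure.map (fun U : Matrix.unitaryGroup (Fin 4) ℂ => U * pauli2U v.1 v.2) μ)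
    (P Q : PauliLabel × PauliLabel) (hPQ : P ≠ Q) :
    ∀ ij kl : Fin 4 × Fin 4,
      (∫ U : Matrix.unitaryGroup (Fin 4) ℂ,
        (((U : Matrix (Fin 4) (Fin 4) ℂ) * pauli2 P.1 P.2 * (U : Matrix (Fin 4) (Fin 4) ℂ)ᴴ) ⊗ₖ
          ((U : Matrix (Fin 4) (Fin 4) ℂ) * pauli2 Q.1 Q.2 * (U : Matrix (Fin 4) (Fin 4) ℂ)ᴴ))
          ij kl ∂μ) = 0 := by
  
  intro ij kl
  set g : Matrix.unitaryGroup (Fin 4) ℂ → ℂ := fun U =>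
    (((U : Matrix (Fin 4) (Fin 4) ℂ) * pauli2 P.1 P.2 * (U : Matrix (Fin 4) (Fin 4) ℂ)ᴴ) ⊗ₖ
      ((U : Matrix (Fin 4) (Fin 4) ℂ) * pauli2 Q.1 Q.2 * (U : Matrix (Fin 4) (Fin 4) ℂ)ᴴ))
      ij kl with hg
  show ∫ U, g U ∂μ = 0
  by_cases hint : Integrable g μ
  · -- continuity facts
    have hU : Continuous (fun U : Matrix.unitaryGroup (Fin 4) ℂ =>
        (U : Matrix (Fin 4) (Fin 4) ℂ)) := continuous_subtype_val
    have hcont : Continuous g := by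
      simp only [hg, Matrix.kroneckerMap_apply]
      exact (((hU.matrix_mul continuous_const).matrix_mul
          hU.matrix_conjTranspose).matrix_elem _ _).mul
        (((hU.matrix_mul continuous_const).matrix_mul
          hU.matrix_conjTranspose).matrix_elem _ _)
    have hmul : ∀ v : PauliLabel × PauliLabel,
        Measurable (fun U : Matrix.unitaryGroup (Fin 4) ℂ => U * pauli2U v.1 v.2) := by
      intro v
      refine Continuous.measurable ?_
      refine continuous_induced_rng.2 ?_
      exact hU.matrix_mul continuous_const
    have hIv : ∀ v : PauliLabel × PauliLabel,
        Integrable g (Measure.map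
          (fun U : Matrix.unitaryGroup (Fin 4) ℂ => U * pauli2U v.1 v.2) μ) := by
      intro v
      rw [integrable_map_measure hcont.aestronglyMeasurable (hmul v).aemeasurable]
      have : (g ∘ fun U : Matrix.unitaryGroup (Fin 4) ℂ => U * pauli2U v.1 v.2)
          = fun U => ((sgn1 v.1 P.1 * sgn1 v.2 P.2) * (sgn1 v.1 Q.1 * sgn1 v.2 Q.2)) * g U :=
        funext fun U => pointwise_key P Q v U ij kl
      rw [this]
      exact hint.const_mul _
    calc ∫ U, g U ∂μ
        = ∫ U, g U ∂((16 : ENNReal)⁻¹ • ∑ v : PauliLabel × PauliLabel,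
            Measure.map (fun U : Matrix.unitaryGroup (Fin 4) ℂ => U * pauli2U v.1 v.2) μ) := by
          rw [← hinv]
      _ = ((16 : ENNReal)⁻¹).toReal • ∑ v : PauliLabel × PauliLabel,
            ∫ U, g U ∂(Measure.map
              (fun U : Matrix.unitaryGroup (Fin 4) ℂ => U * pauli2U v.1 v.2) μ) := by
          rw [integral_smul_measure, integral_finset_sum_measure (fun v _ => hIv v)]
      _ = ((16 : ENNReal)⁻¹).toReal • ∑ v : PauliLabel × PauliLabel,
            ((sgn1 v.1 P.1 * sgn1 v.2 P.2) * (sgn1 v.1 Q.1 * sgn1 v.2 Q.2)) • ∫ U, g U ∂μ := by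
          congr 1
          refine Finset.sum_congr rfl fun v _ => ?_
          rw [integral_map (hmul v).aemeasurable hcont.aestronglyMeasurable]
          have : ∀ U : Matrix.unitaryGroup (Fin 4) ℂ, g (U * pauli2U v.1 v.2)
              = ((sgn1 v.1 P.1 * sgn1 v.2 P.2) * (sgn1 v.1 Q.1 * sgn1 v.2 Q.2)) • g U :=
            fun U => pointwise_key P Q v U ij kl
          simp_rw [this]
          rw [integral_smul]
      _ = 0 := by
          rw [← Finset.sum_smul, sgn_sum_zero hPQ, zero_smul, smul_zero]
  · exact integral_undef hint
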